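/- Let $u:[0,\infty)\to[0,1)$ be $C^1$ with $u(0)=0$ and suppose $u'(y) \le C_0 (1-u(y))\sqrt{-\ln(\mu(1-u(y)))}$ for all $y\ge0$, where $C_0>0$ and $0<\mu<1/100$. Then there exist constants $c, C>0$ depending only on $C_0$ and $\mu$ such that $1-u(y) \ge c\, e^{-C y^2}$ for all $y\ge 0$. -/

import Mathlib

open Real Set

lemma stmt_9_aux (lm C0 y t : ℝ) (ht : 0 ≤ t) (hlm : 0 ≤ lm)
    (h : Real.sqrt t ≤ Real.sqrt lm + C0 / 2 * y) :
    t ≤ 2 * lm + C0 ^ 2 / 2 * y ^ 2 := by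
  have h1 : t = Real.sqrt t ^ 2 := (Real.sq_sqrt ht).symm
  have h2 : Real.sqrt t ^ 2 ≤ (Real.sqrt lm + C0 / 2 * y) ^ 2 :=
    pow_le_pow_left₀ (Real.sqrt_nonneg _) h 2
  have h3 : Real.sqrt lm ^ 2 = lm := Real.sq_sqrt hlm
  nlinarith [sq_nonneg (Real.sqrt lm - C0 / 2 * y)]

theorem stmt_9
    (C0 μ : ℝ) (hC0 : 0 < C0) (hμ : 0 < μ) (hμ' : μ < 1/100)
    (u d : ℝ → ℝ)
    (hu0 : u 0 = 0)
    (hrange : ∀ y, 0 ≤ y → u y ∈ Set.Ico (0:ℝ) 1)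
    (hderiv : ∀ y, 0 ≤ y → HasDerivAt u (d y) y)
    (hd : ∀ y, 0 ≤ y →
      d y ≤ C0 * (1 - u y) * Real.sqrt (-Real.log (μ * (1 - u y)))) :
    ∃ c C : ℝ, 0 < c ∧ 0 < C ∧
      ∀ y, 0 ≤ y → c * Real.exp (-(C * y ^ 2)) ≤ 1 - u y := by
  set L : ℝ → ℝ := fun y => -Real.log (μ * (1 - u y)) with hLdef
  set φ : ℝ → ℝ := fun y => Real.sqrt (L y) - C0 / 2 * y with hφdef
  have hh : ∀ y, 0 ≤ y → 0 < 1 - u y := fun y hy => by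
    have := (hrange y hy).2; linarith
  have hh1 : ∀ y, 0 ≤ y → 1 - u y ≤ 1 := fun y hy => by
    have := (hrange y hy).1; linarith
  have hμpos2 : ∀ y, 0 ≤ y → 0 < μ * (1 - u y) := fun y hy =>
    mul_pos hμ (hh y hy)
  have hμlt1 : ∀ y, 0 ≤ y → μ * (1 - u y) < 1 := fun y hy => by
    have h1 := hh1 y hy
    have h2 := hh y hy
    nlinarith
  have hLpos : ∀ y, 0 ≤ y → 0 < L y := fun y hy => by
    simp only [hLdef]
    have := Real.log_neg (hμpos2 y hy) (hμlt1 y hy)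
    linarith
  -- derivative of φ
  have hφderiv : ∀ y : ℝ, 0 ≤ y →
      HasDerivAt φ ((μ * -(d y)) / (μ * (1 - u y)) * (-1) / (2 * Real.sqrt (L y)) - C0 / 2) y := by
    intro y hy
    have h1 : HasDerivAt (fun z => μ * (1 - u z)) (μ * -(d y)) y :=
      ((hderiv y hy).const_sub 1).const_mul μ
    have h2 : HasDerivAt (fun z => Real.log (μ * (1 - u z)))
        ((μ * -(d y)) / (μ * (1 - u y))) y := h1.log (ne_of_gt (hμpos2 y hy))
    have h3 : HasDerivAt L ((μ * -(d y)) / (μ * (1 - u y)) * (-1)) y := by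
      have := h2.neg
      simpa [hLdef, mul_comm, mul_neg, neg_mul, Pi.neg_def] using this
    have h4 : HasDerivAt (fun z => Real.sqrt (L z))
        ((μ * -(d y)) / (μ * (1 - u y)) * (-1) / (2 * Real.sqrt (L y))) y :=
      h3.sqrt (ne_of_gt (hLpos y hy))
    have h5 : HasDerivAt (fun z => C0 / 2 * z) (C0 / 2) y := by
      simpa using (hasDerivAt_id y).const_mul (C0 / 2)
    simpa [hφdef, Pi.sub_def] using h4.sub h5
  -- derivative is nonpositive
  have hderiv_nonpos : ∀ y : ℝ, 0 ≤ y →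
      (μ * -(d y)) / (μ * (1 - u y)) * (-1) / (2 * Real.sqrt (L y)) - C0 / 2 ≤ 0 := by
    intro y hy
    have hhy := hh y hy
    have hs : 0 < Real.sqrt (L y) := Real.sqrt_pos.mpr (hLpos y hy)
    have heq : (μ * -(d y)) / (μ * (1 - u y)) * (-1) = d y / (1 - u y) := by
      field_simp
    rw [heq]
    have hbound : d y / (1 - u y) ≤ C0 * Real.sqrt (L y) := by
      rw [div_le_iff₀ hhy]
      have := hd y hy
      calc d y ≤ C0 * (1 - u y) * Real.sqrt (-Real.log (μ * (1 - u y))) := this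
        _ = C0 * Real.sqrt (L y) * (1 - u y) := by simp only [hLdef]; ring
    have step : d y / (1 - u y) / (2 * Real.sqrt (L y)) ≤
        C0 * Real.sqrt (L y) / (2 * Real.sqrt (L y)) := by
      gcongr
    have heq2 : C0 * Real.sqrt (L y) / (2 * Real.sqrt (L y)) = C0 / 2 := by
      field_simp
    rw [heq2] at step
    linarith
  -- φ is antitone on [0,∞)
  have hu_cont : ContinuousOn u (Ici (0:ℝ)) := fun y hy =>
    (hderiv y hy).continuousAt.continuousWithinAt
  have hφcont : ContinuousOn φ (Ici (0:ℝ)) := by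
    apply ContinuousOn.sub
    · apply ContinuousOn.sqrt
      apply ContinuousOn.neg
      apply ContinuousOn.log
      · exact (continuousOn_const.mul (continuousOn_const.sub hu_cont))
      · exact fun y hy => ne_of_gt (hμpos2 y hy)
    · exact (continuousOn_const.mul continuousOn_id)
  have hφanti : AntitoneOn φ (Ici (0:ℝ)) := by
    apply antitoneOn_of_deriv_nonpos (convex_Ici 0) hφcont
    · intro y hy
      rw [interior_Ici] at hy
      exact (hφderiv y (le_of_lt hy)).differentiableAt.differentiableWithinAt
    · intro y hy
      rw [interior_Ici] at hy
      rw [(hφderiv y (le_of_lt hy)).deriv]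
      exact hderiv_nonpos y (le_of_lt hy)
  -- hence sqrt(L y) ≤ sqrt(-log μ) + C0/2 * y
  have hμlog : 0 < -Real.log μ := by
    have := Real.log_neg hμ (by linarith)
    linarith
  have hL0 : L 0 = -Real.log μ := by simp [hLdef, hu0]
  have key : ∀ y, 0 ≤ y → Real.sqrt (L y) ≤ Real.sqrt (-Real.log μ) + C0 / 2 * y := by
    intro y hy
    have := hφanti (self_mem_Ici) (mem_Ici.mpr hy) hy
    simp only [hφdef, hL0] at this ⊢
    linarith
  -- conclude
  refine ⟨μ, C0 ^ 2 / 2, hμ, by positivity, ?_⟩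
  intro y hy
  have hLy := hLpos y hy
  have hKey := key y hy
  have hLbound : L y ≤ 2 * (-Real.log μ) + C0 ^ 2 / 2 * y ^ 2 :=
    stmt_9_aux (-Real.log μ) C0 y (L y) hLy.le hμlog.le hKey
  -- L y = -log(μ*(1-u y)) ≤ ... ⟹ μ*(1-u y) ≥ μ^2 * exp(-(C0^2/2) y^2)
  have hlog_ge : Real.log (μ * (1 - u y)) ≥ 2 * Real.log μ - C0 ^ 2 / 2 * y ^ 2 := by
    simp only [hLdef] at hLbound
    linarith
  have hexp : μ ^ 2 * Real.exp (-(C0 ^ 2 / 2 * y ^ 2)) ≤ μ * (1 - u y) := by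
    have h1 : Real.exp (2 * Real.log μ - C0 ^ 2 / 2 * y ^ 2) ≤
        Real.exp (Real.log (μ * (1 - u y))) := Real.exp_le_exp.mpr (by linarith)
    rw [Real.exp_log (hμpos2 y hy)] at h1
    have h2 : Real.exp (2 * Real.log μ - C0 ^ 2 / 2 * y ^ 2) =
        μ ^ 2 * Real.exp (-(C0 ^ 2 / 2 * y ^ 2)) := by
      rw [sub_eq_add_neg, Real.exp_add, two_mul, Real.exp_add, Real.exp_log hμ]
      ring
    linarith [h2 ▸ h1]
  have : μ * (μ * Real.exp (-(C0 ^ 2 / 2 * y ^ 2))) ≤ μ * (1 - u y) := by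
    calc μ * (μ * Real.exp (-(C0 ^ 2 / 2 * y ^ 2)))
        = μ ^ 2 * Real.exp (-(C0 ^ 2 / 2 * y ^ 2)) := by ring
      _ ≤ μ * (1 - u y) := hexp
  exact le_of_mul_le_mul_left this hμ
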